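/- Let Θ ∈ ℝ^{p×r}, let d be an integer with 1 ≤ d ≤ r, and let (B, S) = H_d(Θ). Then: (P1) for every row j ∈ RowSupp(B), the set M_j(B) has at least d+1 elements, and every row of S has at most d nonzero entries; (P2) for every j ∈ RowSupp(B) and every k ∈ M_j(B) with s_j^(k) ≠ 0, sign(s_j^(k)) = sign(b_j^(k)); (P3) for every j ∈ RowSupp(B) and every k ∉ M_j(B), s_j^(k) = 0. -/

import Mathlib

open scoped BigOperators Classical

noncomputable section

/-- The `(d+1)`-th largest value (counted with multiplicity, `1`-indexed `d+1`) among
`|f 1|, …, |f r|`: the largest `t` such that at least `d+1` of the `|f k|` are `≥ t`.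
By the `Real.sSup` convention this is `0` when `d ≥ r`. -/
def kthLargestAbs {r : ℕ} (f : Fin r → ℝ) (d : ℕ) : ℝ :=
  sSup {t : ℝ | d + 1 ≤ (Finset.univ.filter fun k => t ≤ |f k|).card}

/-- The sparse part `S` of the decomposition `H_d(Θ) = (B, S)`: each entry is clipped
to its excess over the `(d+1)`-th largest magnitude in its row, retaining the sign. -/
def Hs {p r : ℕ} (Θ : Matrix (Fin p) (Fin r) ℝ) (d : ℕ) :
    Matrix (Fin p) (Fin r) ℝ :=
  fun j k => Real.sign (Θ j k) * max 0 (|Θ j k| - kthLargestAbs (fun l => Θ j l) d)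

/-- The block part `B = Θ − S` of the decomposition `H_d(Θ) = (B, S)`. -/
def Hb {p r : ℕ} (Θ : Matrix (Fin p) (Fin r) ℝ) (d : ℕ) :
    Matrix (Fin p) (Fin r) ℝ :=
  Θ - Hs Θ d

/-- `M_j(M)`: the set of column indices attaining the (positive) maximum magnitude
in row `j` of `M`. -/
def maxMagSet {p r : ℕ} (M : Matrix (Fin p) (Fin r) ℝ) (j : Fin p) : Finset (Fin r) :=
  Finset.univ.filter fun k => |M j k| = (⨆ l, |M j l|) ∧ 0 < |M j k|

/-! ### Auxiliary lemmas -/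

lemma real_sign_mul_abs (x : ℝ) : Real.sign x * |x| = x := by
  rcases lt_trichotomy x 0 with h | h | h
  · rw [Real.sign_of_neg h, abs_of_neg h]; ring
  · simp [h]
  · rw [Real.sign_of_pos h, abs_of_pos h]; ring

namespace KthAux

variable {r : ℕ} (f : Fin r → ℝ) (d : ℕ)

lemma bddAbove_set (hr : 1 ≤ r) :
    BddAbove {t : ℝ | d + 1 ≤ (Finset.univ.filter fun k => t ≤ |f k|).card} := by
  haveI : Nonempty (Fin r) := ⟨⟨0, hr⟩⟩
  refine ⟨⨆ k, |f k|, fun t ht => ?_⟩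
  obtain ⟨k, hk⟩ := Finset.card_pos.mp (lt_of_lt_of_le (Nat.succ_pos d) ht)
  exact (Finset.mem_filter.mp hk).2.trans
    (le_ciSup (f := fun k => |f k|) (Set.Finite.bddAbove (Set.finite_range _)) k)

lemma zero_mem (hdr : d + 1 ≤ r) :
    (0 : ℝ) ∈ {t : ℝ | d + 1 ≤ (Finset.univ.filter fun k => t ≤ |f k|).card} := by
  have : (Finset.univ.filter fun k : Fin r => (0:ℝ) ≤ |f k|) = Finset.univ := by
    apply Finset.filter_true_of_mem
    intro k _; exact abs_nonneg _
  simp only [Set.mem_setOf_eq, this, Finset.card_univ, Fintype.card_fin]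
  exact hdr

lemma nonneg (hdr : d + 1 ≤ r) : 0 ≤ kthLargestAbs f d :=
  le_csSup (bddAbove_set f d (le_trans (Nat.one_le_iff_ne_zero.mpr (by omega)) hdr))
    (zero_mem f d hdr)

lemma card_ge (hdr : d + 1 ≤ r) :
    d + 1 ≤ (Finset.univ.filter fun k => kthLargestAbs f d ≤ |f k|).card := by
  set v := kthLargestAbs f d with hv
  by_contra h
  push_neg at h
  have hle : (Finset.univ.filter fun k => v ≤ |f k|).card ≤ d := Nat.lt_succ_iff.mp h
  -- there is an index with |f k| < v
  have hne : (Finset.univ.filter fun k => v ≤ |f k|) ≠ Finset.univ := by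
    intro heq
    rw [heq, Finset.card_univ, Fintype.card_fin] at hle
    omega
  obtain ⟨k0, -, hk0⟩ := Finset.exists_of_ssubset
    (ssubset_of_subset_of_ne (Finset.subset_univ _) hne)
  have hk0' : |f k0| < v := by
    by_contra hc
    exact hk0 (Finset.mem_filter.mpr ⟨Finset.mem_univ _, not_lt.mp hc⟩)
  -- the set of entries strictly below v
  set A : Finset (Fin r) := Finset.univ.filter fun k => |f k| < v with hA
  have hAne : A.Nonempty := ⟨k0, Finset.mem_filter.mpr ⟨Finset.mem_univ _, hk0'⟩⟩
  set m := A.sup' hAne fun k => |f k| with hm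
  have hmv : m < v := by
    rw [hm, Finset.sup'_lt_iff]
    intro k hk
    exact (Finset.mem_filter.mp hk).2
  have hub : v ≤ m := by
    apply csSup_le ⟨0, zero_mem f d hdr⟩
    intro t ht
    by_contra hmt
    push_neg at hmt
    have hsub : (Finset.univ.filter fun k => t ≤ |f k|) ⊆
        Finset.univ.filter fun k => v ≤ |f k| := by
      intro k hk
      have htk := (Finset.mem_filter.mp hk).2
      refine Finset.mem_filter.mpr ⟨Finset.mem_univ _, ?_⟩
      by_contra hc
      push_neg at hc
      have : k ∈ A := Finset.mem_filter.mpr ⟨Finset.mem_univ _, hc⟩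
      have := Finset.le_sup' (fun k => |f k|) this
      linarith
    have := le_trans ht (Finset.card_le_card hsub)
    omega
  linarith

lemma card_gt_le (hr : 1 ≤ r) (hdr : d ≤ r) :
    (Finset.univ.filter fun k => kthLargestAbs f d < |f k|).card ≤ d := by
  set v := kthLargestAbs f d with hv
  by_cases hcase : d + 1 ≤ r
  · by_contra h
    push_neg at h
    have h' : d + 1 ≤ (Finset.univ.filter fun k => v < |f k|).card := h
    set A : Finset (Fin r) := Finset.univ.filter fun k => v < |f k| with hA
    have hAne : A.Nonempty := Finset.card_pos.mp (lt_of_lt_of_le (Nat.succ_pos d) h')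
    set t' := A.inf' hAne fun k => |f k| with ht'
    have hvt' : v < t' := by
      rw [ht', Finset.lt_inf'_iff]
      intro k hk
      exact (Finset.mem_filter.mp hk).2
    have hsub : A ⊆ Finset.univ.filter fun k => t' ≤ |f k| := by
      intro k hk
      exact Finset.mem_filter.mpr ⟨Finset.mem_univ _, Finset.inf'_le _ hk⟩
    have hmem : t' ∈ {t : ℝ | d + 1 ≤ (Finset.univ.filter fun k => t ≤ |f k|).card} :=
      le_trans h' (Finset.card_le_card hsub)
    have h2 : t' ≤ v := le_csSup (bddAbove_set f d hr) hmem
    linarith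
  · calc (Finset.univ.filter fun k => v < |f k|).card
        ≤ (Finset.univ : Finset (Fin r)).card := Finset.card_le_card (Finset.subset_univ _)
      _ = r := by simp
      _ ≤ d := by omega

lemma eq_zero_of_ge (hdr : r ≤ d) : kthLargestAbs f d = 0 := by
  have : {t : ℝ | d + 1 ≤ (Finset.univ.filter fun k => t ≤ |f k|).card} = ∅ := by
    apply Set.eq_empty_iff_forall_notMem.mpr
    intro t ht
    have ht2 : d + 1 ≤ (Finset.univ.filter fun k => t ≤ |f k|).card := ht
    have : (Finset.univ.filter fun k => t ≤ |f k|).card ≤ r := by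
      calc _ ≤ (Finset.univ : Finset (Fin r)).card := Finset.card_le_card (Finset.subset_univ _)
        _ = r := by simp
    omega
  rw [kthLargestAbs, this, Real.sSup_empty]

end KthAux

/-- Properties of the decomposition `(B, S) = H_d(Θ)`:
(P1) every nonzero row of `B` attains its maximum magnitude in at least `d+1` columns,
and every row of `S` has at most `d` nonzero entries;
(P2) on a nonzero row of `B`, wherever `S` is nonzero on the maximizing set of the row,
the signs of `S` and `B` agree;
(P3) on a nonzero row of `B`, `S` vanishes outside the maximizing set of the row. -/
theorem Hd_properties (p r : ℕ) (hp : 1 ≤ p) (hr : 1 ≤ r)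
    (Θ : Matrix (Fin p) (Fin r) ℝ) (d : ℕ) (hd1 : 1 ≤ d) (hdr : d ≤ r) :
    ((∀ j : Fin p, (∃ k, Hb Θ d j k ≠ 0) → d + 1 ≤ (maxMagSet (Hb Θ d) j).card) ∧
      (∀ j : Fin p, ((Finset.univ.filter fun k => Hs Θ d j k ≠ 0).card ≤ d))) ∧
    (∀ j : Fin p, (∃ k, Hb Θ d j k ≠ 0) → ∀ k ∈ maxMagSet (Hb Θ d) j,
      Hs Θ d j k ≠ 0 → Real.sign (Hs Θ d j k) = Real.sign (Hb Θ d j k)) ∧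
    (∀ j : Fin p, (∃ k, Hb Θ d j k ≠ 0) → ∀ k, k ∉ maxMagSet (Hb Θ d) j →
      Hs Θ d j k = 0) := by
  haveI : Nonempty (Fin r) := ⟨⟨0, hr⟩⟩
  -- notation per row
  have key : ∀ j : Fin p,
      ((∃ k, Hb Θ d j k ≠ 0) → d + 1 ≤ (maxMagSet (Hb Θ d) j).card) ∧
      ((Finset.univ.filter fun k => Hs Θ d j k ≠ 0).card ≤ d) ∧
      ((∃ k, Hb Θ d j k ≠ 0) → ∀ k ∈ maxMagSet (Hb Θ d) j,
        Hs Θ d j k ≠ 0 → Real.sign (Hs Θ d j k) = Real.sign (Hb Θ d j k)) ∧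
      ((∃ k, Hb Θ d j k ≠ 0) → ∀ k, k ∉ maxMagSet (Hb Θ d) j → Hs Θ d j k = 0) := by
    intro j
    set f : Fin r → ℝ := fun l => Θ j l with hf
    set v : ℝ := kthLargestAbs f d with hv
    have hS : ∀ k, Hs Θ d j k = Real.sign (f k) * max 0 (|f k| - v) := fun k => rfl
    have hB : ∀ k, Hb Θ d j k = f k - Real.sign (f k) * max 0 (|f k| - v) := fun k => rfl
    -- S vanishes where |f k| ≤ v
    have hS0 : ∀ k, |f k| ≤ v → Hs Θ d j k = 0 := by
      intro k hk
      rw [hS k, max_eq_left (by linarith)]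
      ring
    have hBle : ∀ k, |f k| ≤ v → Hb Θ d j k = f k := by
      intro k hk
      rw [hB k, max_eq_left (by linarith)]
      ring
    have hBgt : ∀ k, v < |f k| → Hb Θ d j k = Real.sign (f k) * v := by
      intro k hk
      rw [hB k, max_eq_right (by linarith), mul_sub, real_sign_mul_abs]
      ring
    by_cases hcase : d + 1 ≤ r
    · -- main case
      have hv0 : 0 ≤ v := KthAux.nonneg f d hcase
      have hcard_ge := KthAux.card_ge f d hcase
      have hcard_le := KthAux.card_gt_le f d hr hdr
      have habs : ∀ k, |Hb Θ d j k| = min (|f k|) v := by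
        intro k
        rcases le_or_gt (|f k|) v with h | h
        · rw [hBle k h, min_eq_left h]
        · rw [hBgt k h, abs_mul, abs_of_nonneg hv0, min_eq_right h.le]
          have hfk : f k ≠ 0 := by
            intro h0
            rw [h0, abs_zero] at h
            linarith
          rcases Real.sign_apply_eq_of_ne_zero (f k) hfk with hs | hs <;>
            rw [hs] <;> norm_num
      -- P1 second part
      have P1b : (Finset.univ.filter fun k => Hs Θ d j k ≠ 0).card ≤ d := by
        refine le_trans (Finset.card_le_card ?_) hcard_le
        intro k hk
        have hk' := (Finset.mem_filter.mp hk).2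
        refine Finset.mem_filter.mpr ⟨Finset.mem_univ _, ?_⟩
        by_contra hc
        exact hk' (hS0 k (not_lt.mp hc))
      -- if some `B` entry is nonzero, then `v > 0`
      have hvpos : (∃ k, Hb Θ d j k ≠ 0) → 0 < v := by
        rintro ⟨k, hk⟩
        rcases lt_or_eq_of_le hv0 with h | h
        · exact h
        · exfalso
          apply hk
          have := habs k
          rw [← h, min_eq_right (abs_nonneg _)] at this
          exact abs_eq_zero.mp this
      have hsup : 0 < v → (⨆ l, |Hb Θ d j l|) = v := by
        intro hpos
        obtain ⟨k0, hk0⟩ := Finset.card_pos.mp (lt_of_lt_of_le (Nat.succ_pos d) hcard_ge)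
        have hk0' : v ≤ |f k0| := (Finset.mem_filter.mp hk0).2
        apply le_antisymm
        · apply ciSup_le
          intro l
          rw [habs l]
          exact min_le_right _ _
        · have : |Hb Θ d j k0| = v := by rw [habs k0, min_eq_right hk0']
          rw [← this]
          exact le_ciSup (f := fun l => |Hb Θ d j l|) (Set.Finite.bddAbove (Set.finite_range _)) k0
      have hmemiff : 0 < v → ∀ k, (k ∈ maxMagSet (Hb Θ d) j ↔ v ≤ |f k|) := by
        intro hpos k
        rw [maxMagSet, Finset.mem_filter, hsup hpos, habs k]
        constructor
        · rintro ⟨-, hmin, -⟩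
          exact min_eq_right_iff.mp hmin
        · intro hk
          exact ⟨Finset.mem_univ _, min_eq_right hk, lt_of_lt_of_le hpos (le_min hk le_rfl)⟩
      refine ⟨?_, P1b, ?_, ?_⟩
      · -- P1 first part
        intro hBne
        have hpos := hvpos hBne
        have heq : maxMagSet (Hb Θ d) j = Finset.univ.filter fun k => v ≤ |f k| := by
          ext k
          rw [hmemiff hpos k, Finset.mem_filter]
          simp
        rw [heq]
        exact hcard_ge
      · -- P2
        intro hBne k hk hSk
        have hpos := hvpos hBne
        have hkv : v ≤ |f k| := (hmemiff hpos k).mp hk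
        have hklt : v < |f k| := by
          rcases lt_or_eq_of_le hkv with h | h
          · exact h
          · exact absurd (hS0 k h.ge) hSk
        have hfk : f k ≠ 0 := by
          intro h0
          rw [h0, abs_zero] at hklt
          linarith
        rw [hS k, max_eq_right (by linarith), hBgt k hklt]
        rcases lt_trichotomy (f k) 0 with h | h | h
        · rw [Real.sign_of_neg h]
          rw [Real.sign_of_neg (by linarith : (-1 : ℝ) * (|f k| - v) < 0),
            Real.sign_of_neg (by linarith : (-1 : ℝ) * v < 0)]
        · exact absurd h hfk
        · rw [Real.sign_of_pos h]
          rw [Real.sign_of_pos (by linarith : (0:ℝ) < 1 * (|f k| - v)),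
            Real.sign_of_pos (by linarith : (0:ℝ) < 1 * v)]
      · -- P3
        intro hBne k hk
        have hpos := hvpos hBne
        have : ¬ v ≤ |f k| := fun h => hk ((hmemiff hpos k).mpr h)
        exact hS0 k (not_lt.mp (fun h => this h.le))
    · -- degenerate case: d = r, every row of B vanishes
      have hrd : r ≤ d := by omega
      have hv0 : v = 0 := KthAux.eq_zero_of_ge f d hrd
      have hB0 : ∀ k, Hb Θ d j k = 0 := by
        intro k
        rw [hB k, hv0, sub_zero, max_eq_right (abs_nonneg _), real_sign_mul_abs]
        ring
      have hBno : ¬ ∃ k, Hb Θ d j k ≠ 0 := by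
        rintro ⟨k, hk⟩
        exact hk (hB0 k)
      refine ⟨fun h => absurd h hBno, ?_, fun h => absurd h hBno, fun h => absurd h hBno⟩
      calc (Finset.univ.filter fun k => Hs Θ d j k ≠ 0).card
          ≤ (Finset.univ : Finset (Fin r)).card := Finset.card_le_card (Finset.subset_univ _)
        _ = r := by simp
        _ ≤ d := hrd
  exact ⟨⟨fun j => (key j).1, fun j => (key j).2.1⟩, fun j => (key j).2.2.1,
    fun j => (key j).2.2.2⟩
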